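/- In GL₂(ℚ[x]) (invertible 2×2 matrices over the polynomial ring ℚ[x]), let A_i = [[1, x^i],[0,1]] for each integer i ≥ 1 and let B = [[3,0],[0,1]]. Then the subgroup generated by B together with all the A_i is isomorphic to the presented group G₂ = ⟨a_i (i ≥ 1), b ∥ [a_i, a_j] = 1, b a_i b⁻¹ = a_i³ (i, j ≥ 1)⟩; equivalently, the canonical homomorphism from this presented group to GL₂(ℚ[x]) sending a_i ↦ A_i and b ↦ B is injective. -/

import Mathlib

open Polynomial

/-- The unipotent matrix `A_i = [[1, x^i], [0, 1]]` as an element of `GL₂(ℚ[x])`. -/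
noncomputable def ButtonA (i : ℕ+) : GL (Fin 2) (Polynomial ℚ) where
  val := !![1, X ^ (i : ℕ); 0, 1]
  inv := !![1, -X ^ (i : ℕ); 0, 1]
  val_inv := by
    rw [Matrix.mul_fin_two, Matrix.one_fin_two]
    congr 1 <;> ring
  inv_val := by
    rw [Matrix.mul_fin_two, Matrix.one_fin_two]
    congr 1 <;> ring

/-- The diagonal matrix `B = [[3, 0], [0, 1]]` as an element of `GL₂(ℚ[x])`. -/
noncomputable def ButtonB : GL (Fin 2) (Polynomial ℚ) where
  val := !![3, 0; 0, 1]
  inv := !![C (1 / 3 : ℚ), 0; 0, 1]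
  val_inv := by
    have h : (3 : Polynomial ℚ) * C (1 / 3 : ℚ) = 1 := by
      rw [show (3 : Polynomial ℚ) = C 3 by norm_cast, ← C_mul]; norm_num
    have h' : C (1 / 3 : ℚ) * (3 : Polynomial ℚ) = 1 := by rw [mul_comm]; exact h
    rw [Matrix.mul_fin_two, Matrix.one_fin_two]
    norm_num [h, h']
  inv_val := by
    have h : (3 : Polynomial ℚ) * C (1 / 3 : ℚ) = 1 := by
      rw [show (3 : Polynomial ℚ) = C 3 by norm_cast, ← C_mul]; norm_num
    have h' : C (1 / 3 : ℚ) * (3 : Polynomial ℚ) = 1 := by rw [mul_comm]; exact h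
    rw [Matrix.mul_fin_two, Matrix.one_fin_two]
    norm_num [h, h']

open scoped commutatorElement

/-- The relators of the presented group
`G₂ = ⟨a_i (i ≥ 1), b ∥ [a_i, a_j] = 1, b a_i b⁻¹ = a_i³⟩`:
generators are indexed by `Option ℕ+`, with `some i ↦ a_i` and `none ↦ b`. -/
def ButtonRels : Set (FreeGroup (Option ℕ+)) :=
  (⋃ (i : ℕ+) (j : ℕ+),
      {⁅FreeGroup.of (some i), FreeGroup.of (some j)⁆}) ∪
    ⋃ (i : ℕ+),
      {FreeGroup.of (none : Option ℕ+) * FreeGroup.of (some i) *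
        (FreeGroup.of (none : Option ℕ+))⁻¹ * (FreeGroup.of (some i) ^ 3)⁻¹}

/-- Button's group `G₂ = ⟨a_i (i ≥ 1), b ∥ [a_i, a_j] = 1, b a_i b⁻¹ = a_i³⟩`. -/
def ButtonG2 : Type := PresentedGroup ButtonRels

instance : Group ButtonG2 := by unfold ButtonG2; infer_instance

/-! ### Auxiliary machinery -/

namespace ButtonAux

/-- The unipotent one-parameter subgroup `p ↦ [[1, p], [0, 1]]`. -/
noncomputable def unipH : Multiplicative (Polynomial ℚ) →* GL (Fin 2) (Polynomial ℚ) where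
  toFun p := ⟨!![1, p.toAdd; 0, 1], !![1, -p.toAdd; 0, 1],
    by rw [Matrix.mul_fin_two, Matrix.one_fin_two]; congr 1 <;> ring,
    by rw [Matrix.mul_fin_two, Matrix.one_fin_two]; congr 1 <;> ring⟩
  map_one' := by
    refine Units.ext ?_
    show !![1, (1 : Multiplicative (Polynomial ℚ)).toAdd; 0, 1] = _
    rw [Matrix.GeneralLinearGroup.coe_one, Matrix.one_fin_two]
    congr 1
  map_mul' p q := by
    refine Units.ext ?_
    show !![1, (p*q).toAdd; 0,1] = !![1, p.toAdd;0,1] * !![1, q.toAdd;0,1]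
    rw [Matrix.mul_fin_two]
    congr 1 <;> simp <;> ring

lemma unipH_val (p : Polynomial ℚ) :
    (unipH (Multiplicative.ofAdd p) : Matrix (Fin 2) (Fin 2) (Polynomial ℚ)) = !![1, p; 0, 1] :=
  rfl

lemma buttonA_eq (i : ℕ+) : ButtonA i = unipH (Multiplicative.ofAdd (X ^ (i : ℕ))) :=
  Units.ext rfl

/-- The target function for the presentation homomorphism. -/
noncomputable def tgt : Option ℕ+ → GL (Fin 2) (Polynomial ℚ)
  | none => ButtonB
  | some i => ButtonA i

lemma B_mul_A (i : ℕ+) : ButtonB * ButtonA i = ButtonA i ^ 3 * ButtonB := by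
  have h3 : ButtonA i ^ 3 = unipH (Multiplicative.ofAdd (X ^ (i : ℕ))) ^ 3 := by
    rw [buttonA_eq]
  refine Units.ext ?_
  rw [h3, ← map_pow]
  have : (Multiplicative.ofAdd (X ^ (i : ℕ)) : Multiplicative (Polynomial ℚ)) ^ 3
      = Multiplicative.ofAdd (3 * X ^ (i : ℕ)) := by
    rw [pow_succ, pow_two]
    simp [← ofAdd_add]
    ring
  rw [this]
  show (!![3, 0; 0, 1] : Matrix (Fin 2) (Fin 2) (Polynomial ℚ)) * !![1, X ^ (i:ℕ); 0, 1]
      = !![1, 3 * X ^ (i:ℕ); 0, 1] * !![3, 0; 0, 1]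
  rw [Matrix.mul_fin_two, Matrix.mul_fin_two]
  congr 1 <;> ring

lemma rels_check : ∀ r ∈ ButtonRels, FreeGroup.lift tgt r = 1 := by
  rintro r (hr | hr)
  · simp only [Set.mem_iUnion, Set.mem_singleton_iff] at hr
    obtain ⟨i, j, rfl⟩ := hr
    rw [map_commutatorElement, commutatorElement_eq_one_iff_commute]
    have hi : FreeGroup.lift tgt (FreeGroup.of (some i)) = ButtonA i := FreeGroup.lift_apply_of
    have hj : FreeGroup.lift tgt (FreeGroup.of (some j)) = ButtonA j := FreeGroup.lift_apply_of
    rw [hi, hj, buttonA_eq, buttonA_eq]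
    exact (Commute.all _ _).map unipH
  · simp only [Set.mem_iUnion, Set.mem_singleton_iff] at hr
    obtain ⟨i, rfl⟩ := hr
    have hi : FreeGroup.lift tgt (FreeGroup.of (some i)) = ButtonA i := FreeGroup.lift_apply_of
    have hb : FreeGroup.lift tgt (FreeGroup.of (none : Option ℕ+)) = ButtonB := FreeGroup.lift_apply_of
    simp only [map_mul, map_inv, map_pow, hi, hb]
    rw [mul_inv_eq_one, mul_inv_eq_iff_eq_mul, B_mul_A]

/-- The homomorphism from the presented group. -/
noncomputable def fHom : PresentedGroup ButtonRels →* GL (Fin 2) (Polynomial ℚ) :=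
  PresentedGroup.toGroup rels_check

/-- `a i` in the presented group. -/
def a (i : ℕ+) : PresentedGroup ButtonRels := PresentedGroup.of (some i)

/-- `b` in the presented group. -/
def b : PresentedGroup ButtonRels := PresentedGroup.of (none : Option ℕ+)

lemma fHom_a (i : ℕ+) : fHom (a i) = ButtonA i := PresentedGroup.toGroup.of rels_check

lemma fHom_b : fHom b = ButtonB := PresentedGroup.toGroup.of rels_check

lemma rel_one {r : FreeGroup (Option ℕ+)} (hr : r ∈ ButtonRels) :
    PresentedGroup.mk ButtonRels r = 1 := by
  have : r ∈ Subgroup.normalClosure ButtonRels := Subgroup.subset_normalClosure hr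
  exact (QuotientGroup.eq_one_iff r).2 this

lemma a_comm (i j : ℕ+) : Commute (a i) (a j) := by
  have h : PresentedGroup.mk ButtonRels ⁅FreeGroup.of (some i), FreeGroup.of (some j)⁆ = 1 := by
    apply rel_one
    exact Or.inl (by simp only [Set.mem_iUnion, Set.mem_singleton_iff]; exact ⟨i, j, rfl⟩)
  rw [map_commutatorElement] at h
  exact commutatorElement_eq_one_iff_commute.1 h

lemma b_conj (i : ℕ+) : b * a i * b⁻¹ = a i ^ 3 := by
  have h : PresentedGroup.mk ButtonRels
      (FreeGroup.of (none : Option ℕ+) * FreeGroup.of (some i) *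
        (FreeGroup.of (none : Option ℕ+))⁻¹ * (FreeGroup.of (some i) ^ 3)⁻¹) = 1 := by
    apply rel_one
    exact Or.inr (by simp only [Set.mem_iUnion, Set.mem_singleton_iff]; exact ⟨i, rfl⟩)
  simp only [map_mul, map_inv, map_pow] at h
  rw [mul_inv_eq_one] at h
  exact h

/-- The abelian subgroup generated by the `a i`. -/
def A : Subgroup (PresentedGroup ButtonRels) := Subgroup.closure (Set.range a)

lemma a_mem (i : ℕ+) : a i ∈ A := Subgroup.subset_closure ⟨i, rfl⟩

lemma A_comm : ∀ x ∈ A, ∀ y ∈ A, Commute x y := by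
  intro x hx
  refine Subgroup.closure_induction (fun u hu => ?_) (fun y _ => Commute.one_left y)
    (fun u v _ _ hu hv y hy => Commute.mul_left (hu y hy) (hv y hy))
    (fun u _ hu y hy => Commute.inv_left (hu y hy)) hx
  -- u is a generator: commutes with everything in A
  obtain ⟨i, rfl⟩ := hu
  intro y hy
  refine Subgroup.closure_induction (fun v hv => ?_) (Commute.one_right _)
    (fun u v _ _ h1 h2 => h1.mul_right h2) (fun u _ h => h.inv_right) hy
  obtain ⟨j, rfl⟩ := hv
  exact a_comm i j

noncomputable instance : CommGroup A :=
  { (inferInstance : Group A) with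
    mul_comm := fun x y => Subtype.ext (A_comm x.1 x.2 y.1 y.2) }

/-- `a i` as an element of `A`. -/
def aA (i : ℕ+) : A := ⟨a i, a_mem i⟩

/-- Products of the `a i` indexed by a finitely supported `ℤ`-vector. -/
noncomputable def theta (v : ℕ+ →₀ ℤ) : A := v.prod fun i n => aA i ^ n

lemma theta_zero : theta 0 = 1 := Finsupp.prod_zero_index

lemma theta_single (i : ℕ+) (n : ℤ) : theta (Finsupp.single i n) = aA i ^ n :=
  Finsupp.prod_single_index (zpow_zero _)

lemma theta_add (v w : ℕ+ →₀ ℤ) : theta (v + w) = theta v * theta w :=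
  Finsupp.prod_add_index' (fun _ => zpow_zero _) (fun _ m n => zpow_add _ m n)

lemma theta_surj : ∀ x ∈ A, ∃ v : ℕ+ →₀ ℤ, x = (theta v : A) := by
  intro x hx
  refine Subgroup.closure_induction (fun u hu => ?_) ⟨0, by rw [theta_zero]; rfl⟩
    (fun u v _ _ ⟨p, hp⟩ ⟨q, hq⟩ => ⟨p + q, by rw [theta_add, hp, hq]; rfl⟩)
    (fun u _ ⟨p, hp⟩ => ⟨-p, ?_⟩) hx
  · obtain ⟨i, rfl⟩ := hu
    exact ⟨Finsupp.single i 1, by rw [theta_single, zpow_one]; rfl⟩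
  · have : theta (-p) = (theta p)⁻¹ := by
      rw [eq_inv_iff_mul_eq_one, ← theta_add, neg_add_cancel, theta_zero]
    rw [this, hp]
    rfl

/-- The polynomial attached to a vector `v`. -/
noncomputable def polv (v : ℕ+ →₀ ℤ) : Polynomial ℚ := v.sum fun i n => n • X ^ (i : ℕ)

lemma polv_zero : polv 0 = 0 := Finsupp.sum_zero_index

lemma polv_single (i : ℕ+) (n : ℤ) : polv (Finsupp.single i n) = n • X ^ (i : ℕ) :=
  Finsupp.sum_single_index (zero_zsmul _)

lemma polv_add (v w : ℕ+ →₀ ℤ) : polv (v + w) = polv v + polv w :=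
  Finsupp.sum_add_index' (fun _ => zero_zsmul _) (fun _ m n => add_zsmul _ m n)

lemma polv_coeff (v : ℕ+ →₀ ℤ) (j : ℕ+) : (polv v).coeff (j : ℕ) = (v j : ℚ) := by
  classical
  rw [polv, Finsupp.sum, Polynomial.finset_sum_coeff]
  have : ∀ i ∈ v.support, (((v i) • X ^ (i : ℕ) : Polynomial ℚ)).coeff (j : ℕ)
      = if i = j then (v i : ℚ) else 0 := by
    intro i _
    rw [zsmul_eq_mul, Polynomial.coeff_intCast_mul, Polynomial.coeff_X_pow]
    by_cases h : i = j
    · simp [h]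
    · have : ((j : ℕ) : ℕ) ≠ ((i : ℕ)) := by
        simpa [PNat.coe_inj, eq_comm] using h
      simp [h, Polynomial.coeff_X_pow, this]
  rw [Finset.sum_congr rfl this]
  by_cases hj : j ∈ v.support
  · rw [Finset.sum_ite_eq' v.support j (fun i => (v i : ℚ))]
    simp [hj]
  · rw [Finset.sum_ite_eq' v.support j (fun i => (v i : ℚ))]
    simp only [hj, if_false]
    have : v j = 0 := Finsupp.notMem_support_iff.1 hj
    simp [this]

lemma polv_inj {v : ℕ+ →₀ ℤ} (h : polv v = 0) : v = 0 := by
  ext j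
  have := polv_coeff v j
  rw [h, Polynomial.coeff_zero] at this
  exact_mod_cast this.symm

lemma fHom_theta (v : ℕ+ →₀ ℤ) :
    fHom (theta v : A) = unipH (Multiplicative.ofAdd (polv v)) := by
  induction v using Finsupp.induction with
  | zero => rw [theta_zero, polv_zero]; simp
  | single_add i n w _ _ ih =>
      rw [theta_add, polv_add, theta_single, polv_single]
      have h1 : ((aA i ^ n * theta w : A) : PresentedGroup ButtonRels)
          = (a i) ^ n * ((theta w : A) : PresentedGroup ButtonRels) := by
        push_cast
        rfl
      have h2 : (Multiplicative.ofAdd (X ^ (i : ℕ) : Polynomial ℚ)) ^ n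
          = Multiplicative.ofAdd (n • (X ^ (i : ℕ) : Polynomial ℚ)) := by
        apply Multiplicative.toAdd.injective
        rw [toAdd_zpow]
        rfl
      rw [h1, map_mul, map_zpow, fHom_a, ih, buttonA_eq, ← map_zpow, h2, ← map_mul,
        ← ofAdd_add]

lemma b_conj_A : ∀ x ∈ A, b * x * b⁻¹ ∈ A := by
  intro x hx
  refine Subgroup.closure_induction (fun u hu => ?_) (by simpa using one_mem A)
    (fun u v _ _ hu hv => ?_) (fun u _ hu => ?_) hx
  · obtain ⟨i, rfl⟩ := hu
    rw [b_conj]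
    exact pow_mem (a_mem i) 3
  · have : b * (u * v) * b⁻¹ = (b * u * b⁻¹) * (b * v * b⁻¹) := by group
    rw [this]; exact mul_mem hu hv
  · have : b * u⁻¹ * b⁻¹ = (b * u * b⁻¹)⁻¹ := by group
    rw [this]; exact inv_mem hu

lemma bpow_conj_A (n : ℕ) : ∀ x ∈ A, b ^ n * x * (b ^ n)⁻¹ ∈ A := by
  induction n with
  | zero => intro x hx; simpa using hx
  | succ m ih =>
      intro x hx
      have : b ^ (m + 1) * x * (b ^ (m + 1))⁻¹
          = b ^ m * (b * x * b⁻¹) * (b ^ m)⁻¹ := by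
        rw [pow_succ]; group
      rw [this]
      exact ih _ (b_conj_A x hx)

/-- Normal form: every element is `(b^k)⁻¹ * w * b^l` with `w ∈ A`. -/
lemma normal_form (g : PresentedGroup ButtonRels) :
    ∃ (k l : ℕ) (w : PresentedGroup ButtonRels), w ∈ A ∧ g = (b ^ k)⁻¹ * w * b ^ l := by
  let S : Subgroup (PresentedGroup ButtonRels) :=
    { carrier := {g | ∃ (k l : ℕ) (w : PresentedGroup ButtonRels),
        w ∈ A ∧ g = (b ^ k)⁻¹ * w * b ^ l}
      one_mem' := ⟨0, 0, 1, one_mem A, by group⟩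
      mul_mem' := by
        rintro x y ⟨k, l, w, hw, rfl⟩ ⟨k', l', w', hw', rfl⟩
        rcases le_or_gt k' l with h | h
        · -- l ≥ k' : b^l * (b^k')⁻¹ = b^(l - k')
          refine ⟨k, l - k' + l', w * (b ^ (l - k') * w' * (b ^ (l - k'))⁻¹),
            mul_mem hw (bpow_conj_A _ w' hw'), ?_⟩
          have hb : b ^ l = b ^ (l - k') * b ^ k' := by
            rw [← pow_add, Nat.sub_add_cancel h]
          rw [hb, pow_add]
          group
        · -- l < k'
          refine ⟨k + (k' - l), l', (b ^ (k' - l) * w * (b ^ (k' - l))⁻¹) * w',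
            mul_mem (bpow_conj_A _ w hw) hw', ?_⟩
          have hb : b ^ k' = b ^ (k' - l) * b ^ l := by
            rw [← pow_add, Nat.sub_add_cancel h.le]
          rw [hb, pow_add]
          group
      inv_mem' := by
        rintro x ⟨k, l, w, hw, rfl⟩
        exact ⟨l, k, w⁻¹, inv_mem hw, by group⟩ }
  have : ∀ g : PresentedGroup ButtonRels, g ∈ S := by
    intro g
    apply PresentedGroup.generated_by
    rintro (_ | i)
    · exact ⟨0, 1, 1, one_mem A, by simp [b]⟩
    · exact ⟨0, 0, a i, a_mem i, by simp [a]⟩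
  exact this g

lemma B_pow_val (k : ℕ) :
    ((ButtonB ^ k : GL (Fin 2) (Polynomial ℚ)) : Matrix (Fin 2) (Fin 2) (Polynomial ℚ))
      = !![3 ^ k, 0; 0, 1] := by
  induction k with
  | zero => simp [Matrix.one_fin_two]
  | succ m ih =>
      rw [pow_succ, Units.val_mul, ih]
      show _ * (!![3,0;0,1] : Matrix (Fin 2) (Fin 2) (Polynomial ℚ)) = _
      rw [Matrix.mul_fin_two]
      congr 1 <;> ring

lemma fHom_inj : Function.Injective fHom := by
  rw [injective_iff_map_eq_one]
  intro g hg
  obtain ⟨k, l, w, hw, rfl⟩ := normal_form g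
  obtain ⟨v, rfl⟩ := theta_surj w hw
  rw [map_mul, map_mul, map_inv, map_pow, map_pow, fHom_b, fHom_theta] at hg
  have hg' : ButtonB ^ k = unipH (Multiplicative.ofAdd (polv v)) * ButtonB ^ l := by
    have := congrArg (fun z => ButtonB ^ k * z) hg
    simpa [mul_assoc] using this.symm
  have hval := congrArg Units.val hg'.symm
  rw [Units.val_mul, B_pow_val, B_pow_val, unipH_val, Matrix.mul_fin_two] at hval
  have h01 : polv v = 0 := by
    have := congrFun (congrFun hval 0) 1
    simpa using this
  have h00 : (3 : Polynomial ℚ) ^ l = 3 ^ k := by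
    have := congrFun (congrFun hval 0) 0
    simpa using this
  have hkl : l = k := by
    have h3 : (3 : ℚ) ^ l = 3 ^ k := by
      have := congrArg (Polynomial.eval 0) h00
      simpa using this
    have : ((3 : ℕ) : ℚ) ^ l = ((3 : ℕ) : ℚ) ^ k := by exact_mod_cast h3
    have hnat : (3 : ℕ) ^ l = 3 ^ k := by exact_mod_cast this
    exact Nat.pow_right_injective (by norm_num) hnat
  have hv : v = 0 := polv_inj h01
  rw [hv, theta_zero, hkl]
  simp only [OneMemClass.coe_one, mul_one]
  group

end ButtonAux

/-- The canonical homomorphism from the presented group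
`G₂ = ⟨a_i (i ≥ 1), b ∥ [a_i, a_j] = 1, b a_i b⁻¹ = a_i³⟩` to `GL₂(ℚ[x])` sending
`a_i` to `A_i = [[1, x^i], [0, 1]]` and `b` to `B = [[3, 0], [0, 1]]` is injective;
hence `G₂` is isomorphic to the subgroup of `GL₂(ℚ[x])` generated by `B` and the `A_i`. -/
theorem stmt_7 :
    ∃ f : ButtonG2 →* GL (Fin 2) (Polynomial ℚ),
      Function.Injective f ∧
        (∀ i : ℕ+, f (PresentedGroup.of (some i)) = ButtonA i) ∧
        f (PresentedGroup.of none) = ButtonB := by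
  exact ⟨ButtonAux.fHom, ButtonAux.fHom_inj,
    fun i => ButtonAux.fHom_a i, ButtonAux.fHom_b⟩
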